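/- Let H be a Hopf monoid in a braided monoidal category C, with antipode S. Then the coshear morphism sh^co_H = (m ⊗ id_H) ∘ α⁻¹ ∘ (id_H ⊗ β_{H,H}) ∘ α ∘ (Δ ⊗ id_H) : H ⊗ H → H ⊗ H is an isomorphism if and only if the antipode S : H → H is an isomorphism. -/

import Mathlib

open CategoryTheory MonoidalCategory

universe v u

variable {C : Type u} [Category.{v} C] [MonoidalCategory C] [BraidedCategory C]

/-- The coshear morphism `(m ⊗ id_B) ∘ α⁻¹ ∘ (id_B ⊗ β_{B,B}) ∘ α ∘ (Δ ⊗ id_B)` of a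
bimonoid `B`. -/
noncomputable def Bimon_.coshear (B : Bimon C) : B.X.X ⊗ B.X.X ⟶ B.X.X ⊗ B.X.X :=
  ((Comon.comon (self := (B : Comon (Mon C)))).comul.hom ▷ B.X.X) ≫ (α_ B.X.X B.X.X B.X.X).hom ≫ (B.X.X ◁ (β_ B.X.X B.X.X).hom) ≫
    (α_ B.X.X B.X.X B.X.X).inv ≫ (MonObj.mul (X := B.X.X) ▷ B.X.X)

namespace HopfCoshearAux

open BraidedCategory
open scoped MonObj ComonObj HopfObj

variable {C : Type u} [Category.{v} C] [MonoidalCategory C] [BraidedCategory C]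
variable (A : Hopf C)

/-- The coshear morphism, written on the underlying object. -/
noncomputable def coshear' (A : Hopf C) : A.X ⊗ A.X ⟶ A.X ⊗ A.X :=
    (Δ[A.X] ▷ A.X) ≫ (α_ A.X A.X A.X).hom ≫ (A.X ◁ (β_ A.X A.X).hom) ≫
      (α_ A.X A.X A.X).inv ≫ (μ[A.X] ▷ A.X)

/-- The comultiplication interacts with the inverse of the antipode. -/
theorem invAntipode_comul [IsIso 𝒮[A.X]] :
    inv 𝒮[A.X] ≫ Δ[A.X] =
      Δ[A.X] ≫ (inv 𝒮[A.X] ⊗ₘ inv 𝒮[A.X]) ≫ (β_ A.X A.X).inv := by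
  rw [← cancel_epi 𝒮[A.X], IsIso.hom_inv_id_assoc, reassoc_of% HopfObj.antipode_comul A.X,
    tensorHom_comp_tensorHom_assoc, IsIso.hom_inv_id, id_tensorHom_id, Category.id_comp,
    Iso.hom_inv_id, Category.comp_id]

theorem invAntipode_counit [IsIso 𝒮[A.X]] :
    inv 𝒮[A.X] ≫ ε[A.X] = ε[A.X] := by
  rw [← cancel_epi 𝒮[A.X], IsIso.hom_inv_id_assoc, HopfObj.antipode_counit]

theorem one_invAntipode [IsIso 𝒮[A.X]] :
    η[A.X] ≫ inv 𝒮[A.X] = η[A.X] := by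
  rw [← HopfObj.one_antipode_assoc A.X, IsIso.hom_inv_id, Category.comp_id]

theorem antipode_inv_left [IsIso 𝒮[A.X]] :
    Δ[A.X] ≫ (inv 𝒮[A.X] ▷ A.X) ≫ (β_ A.X A.X).inv ≫ μ[A.X] =
      ε[A.X] ≫ η[A.X] := by
  have key : inv 𝒮[A.X] ≫ Δ[A.X] ≫ (𝒮[A.X] ▷ A.X) ≫ μ[A.X]
      = Δ[A.X] ≫ (inv 𝒮[A.X] ▷ A.X) ≫ (β_ A.X A.X).inv ≫ μ[A.X] := by
    rw [reassoc_of% invAntipode_comul A, ← braiding_inv_naturality_right_assoc]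
    rw [tensorHom_def_assoc, ← MonoidalCategory.whiskerLeft_comp_assoc, IsIso.inv_hom_id,
      MonoidalCategory.whiskerLeft_id, Category.id_comp]
  rw [← key, HopfObj.antipode_left, ← Category.assoc, invAntipode_counit]

theorem antipode_inv_right [IsIso 𝒮[A.X]] :
    Δ[A.X] ≫ (A.X ◁ inv 𝒮[A.X]) ≫ (β_ A.X A.X).inv ≫ μ[A.X] =
      ε[A.X] ≫ η[A.X] := by
  have key : inv 𝒮[A.X] ≫ Δ[A.X] ≫ (A.X ◁ 𝒮[A.X]) ≫ μ[A.X]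
      = Δ[A.X] ≫ (A.X ◁ inv 𝒮[A.X]) ≫ (β_ A.X A.X).inv ≫ μ[A.X] := by
    rw [reassoc_of% invAntipode_comul A, ← braiding_inv_naturality_left_assoc]
    rw [tensorHom_def'_assoc, ← comp_whiskerRight_assoc, IsIso.inv_hom_id,
      MonoidalCategory.id_whiskerRight, Category.id_comp]
  rw [← key, HopfObj.antipode_right, ← Category.assoc, invAntipode_counit]

/-- Yang–Baxter relation in a convenient composite form. -/
theorem H_lemma (X Y Z : C) :
    (β_ X (Y ⊗ Z)).hom ≫ ((β_ Y Z).hom ▷ X) ≫ (α_ Z Y X).hom =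
      (α_ X Y Z).inv ≫ (β_ (X ⊗ Y) Z).hom ≫ (Z ◁ (β_ X Y).hom) := by
  rw [BraidedCategory.braiding_tensor_right_hom, BraidedCategory.braiding_tensor_left_hom]
  simp only [Category.assoc, Iso.inv_hom_id_assoc]
  exact BraidedCategory.yang_baxter X Y Z

/-- Inverse form of the Yang–Baxter relation. -/
theorem braid_aux (X Y Z : C) :
    (α_ Z Y X).inv ≫ ((β_ Y Z).inv ▷ X) ≫ (β_ X (Y ⊗ Z)).inv =
      (Z ◁ (β_ X Y).inv) ≫ (β_ (X ⊗ Y) Z).inv ≫ (α_ X Y Z).hom := by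
  rw [← cancel_epi ((α_ X Y Z).inv ≫ (β_ (X ⊗ Y) Z).hom ≫ (Z ◁ (β_ X Y).hom))]
  conv_lhs => rw [← H_lemma X Y Z]
  simp

/-- Associativity of the braided-opposite multiplication. -/
theorem mulOp_assoc (M : C) [MonObj M] :
    (α_ M M M).inv ≫ (((β_ M M).inv ≫ μ[M]) ▷ M) ≫ (β_ M M).inv ≫ μ[M] =
      (M ◁ ((β_ M M).inv ≫ μ[M])) ≫ (β_ M M).inv ≫ μ[M] := by
  simp only [comp_whiskerRight, MonoidalCategory.whiskerLeft_comp, Category.assoc]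
  rw [braiding_inv_naturality_left_assoc, braiding_inv_naturality_right_assoc, MonObj.mul_assoc M]
  rw [reassoc_of% braid_aux M M M]

/-- Unit law for the braided-opposite multiplication. -/
theorem mulOp_one (M : C) [MonObj M] :
    (M ◁ η[M]) ≫ (β_ M M).inv ≫ μ[M] = (ρ_ M).hom := by
  rw [braiding_inv_naturality_right_assoc, braiding_inv_tensorUnit_left]
  simp

/-- The common part of the two invertibility computations. -/
theorem key (A : Hopf C) (F : A.X ⟶ A.X ⊗ A.X)
    (hF : F ≫ (β_ A.X A.X).inv ≫ μ[A.X] = ε[A.X] ≫ η[A.X]) :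
    (A.X ◁ Δ[A.X]) ≫ (A.X ◁ (F ▷ A.X)) ≫
      (A.X ◁ (α_ A.X A.X A.X).hom) ≫
      (α_ A.X A.X (A.X ⊗ A.X)).inv ≫
      (α_ (A.X ⊗ A.X) A.X A.X).inv ≫
      ((((β_ A.X A.X).inv ≫ μ[A.X]) ▷ A.X) ▷ A.X) ≫
      (((β_ A.X A.X).inv ≫ μ[A.X]) ▷ A.X) = 𝟙 _ := by
  have pent : (A.X ◁ (α_ A.X A.X A.X).hom) ≫
      (α_ A.X A.X (A.X ⊗ A.X)).inv ≫
      (α_ (A.X ⊗ A.X) A.X A.X).inv =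
      (α_ A.X (A.X ⊗ A.X) A.X).inv ≫
      ((α_ A.X A.X A.X).inv ▷ A.X) := by
    monoidal
  rw [reassoc_of% pent]
  slice_lhs 4 6 => rw [← comp_whiskerRight, ← comp_whiskerRight, mulOp_assoc A.X]
  -- 1 X◁Δ, 2 X◁(F▷X), 3 α_{X,X⊗X,X}.inv, 4 ((X◁M')≫M')▷X
  simp only [comp_whiskerRight, Category.assoc]
  -- 4 (X◁M')▷X, 5 M'▷X
  slice_lhs 3 4 => rw [← associator_inv_naturality_middle]
  -- 3 X◁(M'▷X), 4 α_{X,X,X}.inv, 5 M'▷X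
  slice_lhs 2 3 => rw [← MonoidalCategory.whiskerLeft_comp, ← comp_whiskerRight, hF]
  -- 2 X◁((ε≫e)▷X)
  simp only [comp_whiskerRight, MonoidalCategory.whiskerLeft_comp, Category.assoc]
  rw [← MonoidalCategory.whiskerLeft_comp_assoc, ComonObj.counit_comul]
  -- X◁λ.inv ≫ X◁(e▷X) ≫ α.inv ≫ β₋▷X ≫ m▷X
  slice_lhs 2 3 => rw [associator_inv_naturality_middle]
  slice_lhs 3 4 => rw [← comp_whiskerRight, braiding_inv_naturality_right]
  simp only [comp_whiskerRight, Category.assoc, braiding_inv_tensorUnit_left]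
  slice_lhs 5 6 => rw [← comp_whiskerRight, MonObj.one_mul A.X]
  monoidal

/-- The braided-opposite shear morphism. -/
noncomputable def shearOp (A : Hopf C) : A.X ⊗ A.X ⟶ A.X ⊗ A.X :=
  (A.X ◁ Δ[A.X]) ≫ (α_ A.X A.X A.X).inv ≫
    (((β_ A.X A.X).inv ≫ μ[A.X]) ▷ A.X)

/-- Candidate inverse of the braided-opposite shear morphism. -/
noncomputable def shearOpInv (A : Hopf C) [IsIso 𝒮[A.X]] :
    A.X ⊗ A.X ⟶ A.X ⊗ A.X :=
  (A.X ◁ (Δ[A.X] ≫ (inv 𝒮[A.X] ▷ A.X))) ≫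
    (α_ A.X A.X A.X).inv ≫ (((β_ A.X A.X).inv ≫ μ[A.X]) ▷ A.X)

theorem shearOp_shearOpInv (A : Hopf C) [IsIso 𝒮[A.X]] :
    shearOp A ≫ shearOpInv A = 𝟙 _ := by
  dsimp only [shearOp, shearOpInv]
  simp only [MonoidalCategory.whiskerLeft_comp, Category.assoc]
  -- 1 X◁Δ, 2 α⁻¹, 3 M'▷X, 4 X◁Δ, 5 X◁(T▷X), 6 α⁻¹, 7 M'▷X
  slice_lhs 3 4 => rw [← whisker_exchange]
  slice_lhs 4 5 => rw [← whisker_exchange]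
  slice_lhs 5 6 => rw [associator_inv_naturality_left]
  slice_lhs 2 3 => rw [← associator_inv_naturality_right]
  slice_lhs 3 4 => rw [← associator_inv_naturality_right]
  -- 1 X◁Δ, 2 X◁(X◁Δ), 3 X◁(X◁(T▷X)), 4 α_{X,X,X⊗X}.inv, 5 α_{X⊗X,X,X}.inv, 6 (M'▷X)▷X, 7 M'▷X
  have inner2 : Δ[A.X] ≫ (A.X ◁ Δ[A.X]) ≫
      (A.X ◁ (inv 𝒮[A.X] ▷ A.X)) =
      Δ[A.X] ≫ ((Δ[A.X] ≫ (A.X ◁ inv 𝒮[A.X])) ▷ A.X) ≫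
        (α_ A.X A.X A.X).hom := by
    rw [ComonObj.comul_assoc_assoc, ← associator_naturality_middle]
    simp only [comp_whiskerRight, Category.assoc]
  slice_lhs 1 3 => rw [← MonoidalCategory.whiskerLeft_comp, ← MonoidalCategory.whiskerLeft_comp,
    inner2]
  simp only [MonoidalCategory.whiskerLeft_comp, Category.assoc]
  exact key A _ (by rw [Category.assoc, antipode_inv_right])

theorem shearOpInv_shearOp (A : Hopf C) [IsIso 𝒮[A.X]] :
    shearOpInv A ≫ shearOp A = 𝟙 _ := by
  dsimp only [shearOp, shearOpInv]
  simp only [MonoidalCategory.whiskerLeft_comp, Category.assoc]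
  -- 1 X◁Δ, 2 X◁(T▷X), 3 α⁻¹, 4 M'▷X, 5 X◁Δ, 6 α⁻¹, 7 M'▷X
  slice_lhs 4 5 => rw [← whisker_exchange]
  slice_lhs 5 6 => rw [associator_inv_naturality_left]
  slice_lhs 3 4 => rw [← associator_inv_naturality_right]
  -- 1 X◁Δ, 2 X◁(T▷X), 3 X◁(X◁Δ), 4 α_{X,X,X⊗X}.inv, 5 α_{X⊗X,X,X}.inv, 6 (M'▷X)▷X, 7 M'▷X
  have inner1 : Δ[A.X] ≫ (inv 𝒮[A.X] ▷ A.X) ≫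
      (A.X ◁ Δ[A.X]) =
      Δ[A.X] ≫ ((Δ[A.X] ≫ (inv 𝒮[A.X] ▷ A.X)) ▷ A.X) ≫
        (α_ A.X A.X A.X).hom := by
    rw [← whisker_exchange]
    rw [ComonObj.comul_assoc_assoc, ← associator_naturality_left]
    simp only [comp_whiskerRight, Category.assoc]
  slice_lhs 1 3 => rw [← MonoidalCategory.whiskerLeft_comp, ← MonoidalCategory.whiskerLeft_comp,
    inner1]
  simp only [MonoidalCategory.whiskerLeft_comp, Category.assoc]
  exact key A _ (by rw [Category.assoc, antipode_inv_left])

/-- Factorization of the coshear morphism through the braided-opposite shear. -/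
theorem coshear_factor (A : Hopf C) :
    coshear' A = (β_ A.X A.X).hom ≫ shearOp A := by
  dsimp only [coshear', shearOp]
  have nat : (β_ A.X A.X).hom ≫ (A.X ◁ Δ[A.X]) =
      (Δ[A.X] ▷ A.X) ≫ (β_ (A.X ⊗ A.X) A.X).hom := by
    exact (BraidedCategory.braiding_naturality_left Δ[A.X] A.X).symm
  rw [reassoc_of% nat, BraidedCategory.braiding_tensor_left_hom]
  simp only [comp_whiskerRight, Category.assoc, Iso.hom_inv_id_assoc]
  slice_rhs 5 6 => rw [← comp_whiskerRight, Iso.hom_inv_id, MonoidalCategory.id_whiskerRight]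
  simp

theorem antipode_coshear :
    Δ[A.X] ≫ (𝒮[A.X] ▷ A.X) ≫ coshear' A =
      𝒮[A.X] ≫ (λ_ A.X).inv ≫ (η[A.X] ▷ A.X) := by
  dsimp only [coshear']
  slice_lhs 2 3 => rw [← comp_whiskerRight, HopfObj.antipode_comul]
  simp only [comp_whiskerRight, Category.assoc]
  -- 1 Δ, 2 Δ▷X, 3 β▷X, 4 (S⊗S)▷X, 5 α, 6 X◁β, 7 α⁻¹, 8 m▷X
  slice_lhs 4 4 => rw [MonoidalCategory.tensorHom_def, comp_whiskerRight]
  -- 1 Δ, 2 Δ▷X, 3 β▷X, 4 (S▷X)▷X, 5 (X◁S)▷X, 6 α, 7 X◁β, 8 α⁻¹, 9 m▷X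
  slice_lhs 5 6 => rw [associator_naturality_middle]
  slice_lhs 6 7 => rw [← MonoidalCategory.whiskerLeft_comp,
    BraidedCategory.braiding_naturality_left, MonoidalCategory.whiskerLeft_comp]
  slice_lhs 7 8 => rw [associator_inv_naturality_right]
  slice_lhs 8 9 => rw [whisker_exchange]
  -- 1 Δ, 2 Δ▷X, 3 β▷X, 4 (S▷X)▷X, 5 α, 6 X◁β, 7 α⁻¹, 8 m▷X, 9 X◁S
  slice_lhs 4 5 => rw [associator_naturality_left]
  slice_lhs 5 6 => rw [← whisker_exchange]
  slice_lhs 6 7 => rw [associator_inv_naturality_left]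
  -- 1 Δ, 2 Δ▷X, 3 β▷X, 4 α, 5 X◁β, 6 α⁻¹, 7 (S▷X)▷X, 8 m▷X, 9 X◁S
  rw [ComonObj.comul_assoc_flip_assoc]
  -- 1 Δ, 2 X◁Δ, 3 α⁻¹, 4 β▷X, 5 α, 6 X◁β, 7 α⁻¹, 8 (S▷X)▷X, 9 m▷X, 10 X◁S
  slice_lhs 3 7 => rw [← BraidedCategory.braiding_tensor_right_hom]
  have nat : A.X ◁ Δ[A.X] ≫ (β_ A.X (A.X ⊗ A.X)).hom
      = (β_ A.X A.X).hom ≫ Δ[A.X] ▷ A.X :=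
    BraidedCategory.braiding_naturality_right _ _
  simp only [Category.assoc]
  rw [reassoc_of% nat]
  -- 1 Δ, 2 β, 3 Δ▷X, 4 (S▷X)▷X, 5 m▷X, 6 X◁S
  slice_lhs 3 5 => rw [← comp_whiskerRight, ← comp_whiskerRight, HopfObj.antipode_left]
  -- 1 Δ, 2 β, 3 (ε≫e)▷X, 4 X◁S
  rw [comp_whiskerRight]
  slice_lhs 2 3 => rw [← BraidedCategory.braiding_naturality_right]
  -- 1 Δ, 2 X◁ε, 3 β_{X,𝟙}, 4 e▷X, 5 X◁S
  simp only [Category.assoc]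
  rw [ComonObj.comul_counit_assoc, rightUnitor_inv_braiding_assoc]
  -- λ.inv ≫ e▷X ≫ X◁S
  slice_lhs 2 3 => rw [← whisker_exchange]
  rw [← leftUnitor_inv_naturality_assoc]

theorem coshear_antipode_mul :
    coshear' A ≫ (𝒮[A.X] ▷ A.X) ≫ μ[A.X] =
      (ε[A.X] ▷ A.X) ≫ (λ_ A.X).hom ≫ 𝒮[A.X] := by
  dsimp only [coshear']
  simp only [Category.assoc]
  -- 1 Δ▷X, 2 α, 3 X◁β, 4 α⁻¹, 5 m▷X, 6 S▷X, 7 m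
  slice_lhs 5 6 => rw [← comp_whiskerRight, HopfObj.mul_antipode]
  simp only [comp_whiskerRight, Category.assoc]
  -- 1 Δ▷X, 2 α, 3 X◁β, 4 α⁻¹, 5 (S⊗S)▷X, 6 β▷X, 7 m▷X, 8 m
  slice_lhs 5 5 => rw [MonoidalCategory.tensorHom_def, comp_whiskerRight]
  -- 1 Δ▷X, 2 α, 3 X◁β, 4 α⁻¹, 5 (S▷X)▷X, 6 (X◁S)▷X, 7 β▷X, 8 m▷X, 9 m
  slice_lhs 4 5 => rw [← associator_inv_naturality_left]
  slice_lhs 3 4 => rw [whisker_exchange]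
  slice_lhs 2 3 => rw [← associator_naturality_left]
  slice_lhs 1 2 => rw [← comp_whiskerRight]
  -- 1 (Δ≫S▷X)▷X, 2 α, 3 X◁β, 4 α⁻¹, 5 (X◁S)▷X, 6 β▷X, 7 m▷X, 8 m
  slice_lhs 4 5 => rw [← associator_inv_naturality_middle]
  slice_lhs 3 4 => rw [← MonoidalCategory.whiskerLeft_comp,
    ← BraidedCategory.braiding_naturality_right, MonoidalCategory.whiskerLeft_comp]
  slice_lhs 2 3 => rw [← associator_naturality_right]
  slice_lhs 1 2 => rw [← whisker_exchange]
  -- 1 X◁S, 2 (Δ≫S▷X)▷X, 3 α, 4 X◁β, 5 α⁻¹, 6 β▷X, 7 m▷X, 8 m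
  slice_lhs 7 8 => rw [MonObj.mul_assoc A.X]
  -- 1 X◁S, 2 (Δ≫S▷X)▷X, 3 α, 4 X◁β, 5 α⁻¹, 6 β▷X, 7 α, 8 X◁m, 9 m
  slice_lhs 3 7 => rw [← BraidedCategory.braiding_tensor_left_hom]
  -- 1 X◁S, 2 (Δ≫S▷X)▷X, 3 β_{X⊗X,X}, 4 X◁m, 5 m
  slice_lhs 2 3 => rw [BraidedCategory.braiding_naturality_left]
  -- 1 X◁S, 2 β, 3 X◁(Δ≫S▷X), 4 X◁m, 5 m
  slice_lhs 3 4 => rw [← MonoidalCategory.whiskerLeft_comp, Category.assoc,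
    HopfObj.antipode_left, MonoidalCategory.whiskerLeft_comp]
  -- 1 X◁S, 2 β, 3 X◁ε, 4 X◁e, 5 m
  slice_lhs 4 5 => rw [MonObj.mul_one A.X]
  -- 1 X◁S, 2 β, 3 X◁ε, 4 ρ.hom
  slice_lhs 2 3 => rw [← BraidedCategory.braiding_naturality_left]
  -- 1 X◁S, 2 ε▷X, 3 β_{𝟙,X}, 4 ρ.hom
  slice_lhs 3 4 => rw [braiding_rightUnitor]
  -- 1 X◁S, 2 ε▷X, 3 λ.hom
  slice_lhs 1 2 => rw [whisker_exchange]
  simp only [Category.assoc]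
  rw [MonoidalCategory.leftUnitor_naturality]

end HopfCoshearAux

open scoped MonObj ComonObj HopfObj

/-- For a Hopf monoid `H` in a braided monoidal category with antipode `S`, the coshear
morphism is an isomorphism if and only if the antipode is an isomorphism. -/
theorem Hopf_.isIso_coshear_iff_isIso_antipode (H : Hopf C) :
    IsIso (Bimon_.coshear H.toBimon) ↔ IsIso (HopfObj.antipode (X := H.X)) := by
  show IsIso (HopfCoshearAux.coshear' H) ↔ IsIso 𝒮[H.X]
  constructor
  · intro h
    refine ⟨(λ_ H.X).inv ≫ (η[H.X] ▷ H.X) ≫ inv (HopfCoshearAux.coshear' H) ≫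
      (ε[H.X] ▷ H.X) ≫ (λ_ H.X).hom, ?_, ?_⟩
    · rw [← reassoc_of% HopfCoshearAux.antipode_coshear H, IsIso.hom_inv_id_assoc,
        ← comp_whiskerRight_assoc, HopfObj.antipode_counit H.X]
      simp
    · simp only [Category.assoc]
      rw [← HopfCoshearAux.coshear_antipode_mul H, IsIso.inv_hom_id_assoc,
        ← comp_whiskerRight_assoc, HopfObj.one_antipode H.X]
      simp
  · intro h
    refine ⟨HopfCoshearAux.shearOpInv H ≫ (β_ H.X H.X).inv, ?_, ?_⟩
    · rw [HopfCoshearAux.coshear_factor H]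
      simp only [Category.assoc]
      rw [reassoc_of% HopfCoshearAux.shearOp_shearOpInv H]
      simp
    · rw [HopfCoshearAux.coshear_factor H]
      simp only [Category.assoc]
      rw [Iso.inv_hom_id_assoc, HopfCoshearAux.shearOpInv_shearOp H]
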